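/- For k ≥ 1, the change in the lower bound satisfies A_kL_k − A_{k−1}L_{k−1} ≥ a_kf(x_k) − (a_k²/(2(μ₀ + μA_k)))‖∇f(x_k)‖² + a_k'⟨∇f(x_k), v_{k−1} − x_k⟩. -/

import Mathlib

open RealInnerProductSpace Finset

section Aux
variable {E : Type*} [NormedAddCommGroup E] [InnerProductSpace ℝ E]

lemma expand1 (p q : E) (t : ℝ) :
    ‖p + t • q‖ ^ 2 = ‖p‖ ^ 2 + 2 * t * ⟪p, q⟫ + t ^ 2 * ‖q‖ ^ 2 := by
  rw [norm_add_sq_real, real_inner_smul_right, norm_smul]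
  simp [mul_pow, sq_abs]
  ring

lemma expand2 (t g d : E) (c₁ c₂ : ℝ) :
    ‖t + (c₁ • g + c₂ • d)‖ ^ 2 =
      ⟪t,t⟫ + 2*c₁*⟪t,g⟫ + 2*c₂*⟪t,d⟫ + c₁^2*⟪g,g⟫ + 2*c₁*c₂*⟪g,d⟫ + c₂^2*⟪d,d⟫ := by
  rw [← real_inner_self_eq_norm_sq]
  simp only [inner_add_left, inner_add_right, real_inner_smul_left, real_inner_smul_right]
  rw [real_inner_comm g t, real_inner_comm d t, real_inner_comm d g]
  ring

lemma scalar_key (s' mu ak σ P Q R S T U : ℝ) (hσeq : σ = s' + mu * ak) (hσne : σ ≠ 0) :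
    s' / 2 * P + ak * ((Q + T) + mu / 2 * (P + 2 * R + U))
      - (- (ak ^ 2 / (2 * σ)) * S + (ak * s' / σ) * T)
    = σ / 2 * (P + 2 * (ak / σ) * Q + 2 * (ak * mu / σ) * R + (ak / σ) ^ 2 * S
        + 2 * (ak / σ) * (ak * mu / σ) * T + (ak * mu / σ) ^ 2 * U)
      + ak * mu * s' / (2 * σ) * U := by
  field_simp
  subst hσeq
  ring
end Aux

theorem lower_bound_change {n : ℕ} (f : EuclideanSpace ℝ (Fin n) → ℝ) (L μ : ℝ)
    (hL : 0 < L) (hμ : 0 ≤ μ) (hμL : μ < L)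
    (hdiff : Differentiable ℝ f)
    (xstar : EuclideanSpace ℝ (Fin n)) (hstar : ∀ x, f xstar ≤ f x)
    (a A a' : ℕ → ℝ) (ha : ∀ i, 0 < a i)
    (hA : ∀ i, A i = ∑ j ∈ Finset.range (i + 1), a j)
    (ha' : ∀ i, a' i = a i * ((L - μ) + μ * A (i - 1)) / ((L - μ) + μ * A i))
    (x v : ℕ → EuclideanSpace ℝ (Fin n))
    (m : ℕ → EuclideanSpace ℝ (Fin n) → ℝ)
    (hm : ∀ i u, m i u = ∑ j ∈ Finset.range (i + 1),
        a j * (⟪gradient f (x j), u - x j⟫ + μ / 2 * ‖u - x j‖ ^ 2)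
        + (L - μ) / 2 * ‖u - x 0‖ ^ 2)
    (hv : ∀ i u, m i (v i) ≤ m i u)
    (Lb : ℕ → ℝ)
    (hLb : ∀ i, Lb i = (∑ j ∈ Finset.range (i + 1), a j * f (x j) + m i (v i)) / A i
        - (L - μ) / (2 * A i) * ‖x 0 - xstar‖ ^ 2)
    (k : ℕ) (hk : 1 ≤ k) :
    A k * Lb k - A (k - 1) * Lb (k - 1) ≥
      a k * f (x k) - a k ^ 2 / (2 * ((L - μ) + μ * A k)) * ‖gradient f (x k)‖ ^ 2
      + a' k * ⟪gradient f (x k), v (k - 1) - x k⟫ := by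
  have hk1 : k - 1 + 1 = k := Nat.sub_add_cancel hk
  have hApos : ∀ i, 0 < A i := by
    intro i
    rw [hA]
    exact Finset.sum_pos (fun j _ => ha j) Finset.nonempty_range_add_one
  have hσpos : ∀ i, 0 < (L - μ) + μ * A i := by
    intro i
    have : 0 ≤ μ * A i := mul_nonneg hμ (hApos i).le
    linarith
  -- interpolation identity for the quadratic model
  have interp : ∀ i (u w : EuclideanSpace ℝ (Fin n)) (t : ℝ),
      m i (w + t • (u - w)) = (1 - t) * m i w + t * m i u
        - ((L - μ) + μ * A i) / 2 * (t * (1 - t)) * ‖u - w‖ ^ 2 := by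
    intro i u w t
    have hvec : ∀ y : EuclideanSpace ℝ (Fin n), w + t • (u - w) - y = (w - y) + t • (u - w) := by
      intro y; module
    have hvec2 : ∀ y : EuclideanSpace ℝ (Fin n), u - y = (w - y) + (u - w) := by
      intro y; module
    have hnorm : ∀ y : EuclideanSpace ℝ (Fin n),
        ‖w + t • (u - w) - y‖ ^ 2 = (1 - t) * ‖w - y‖ ^ 2 + t * ‖u - y‖ ^ 2
          - t * (1 - t) * ‖u - w‖ ^ 2 := by
      intro y
      rw [hvec y, hvec2 y, expand1, norm_add_sq_real]
      ring
    have hinner : ∀ (c y : EuclideanSpace ℝ (Fin n)),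
        ⟪c, w + t • (u - w) - y⟫ = (1 - t) * ⟪c, w - y⟫ + t * ⟪c, u - y⟫ := by
      intro c y
      rw [hvec y, hvec2 y, inner_add_right, inner_add_right, real_inner_smul_right]
      ring
    rw [hm, hm, hm, hA]
    have hterm : ∀ j ∈ Finset.range (i + 1),
        a j * (⟪gradient f (x j), w + t • (u - w) - x j⟫ + μ / 2 * ‖w + t • (u - w) - x j‖ ^ 2)
        = ((1 - t) * (a j * (⟪gradient f (x j), w - x j⟫ + μ / 2 * ‖w - x j‖ ^ 2))
          + t * (a j * (⟪gradient f (x j), u - x j⟫ + μ / 2 * ‖u - x j‖ ^ 2)))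
          - a j * (μ / 2 * (t * (1 - t)) * ‖u - w‖ ^ 2) := by
      intro j _
      rw [hnorm, hinner]
      ring
    rw [Finset.sum_congr rfl hterm, Finset.sum_sub_distrib, Finset.sum_add_distrib,
      ← Finset.mul_sum, ← Finset.mul_sum, ← Finset.sum_mul, hnorm]
    ring
  -- strong minimality of v i
  have hstrongmin : ∀ i u, m i (v i) + ((L - μ) + μ * A i) / 2 * ‖u - v i‖ ^ 2 ≤ m i u := by
    intro i u
    have hσi := hσpos i
    have key : ∀ t : ℝ, 0 < t →
        ((L - μ) + μ * A i) / 2 * (1 - t) * ‖u - v i‖ ^ 2 ≤ m i u - m i (v i) := by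
      intro t ht
      have h1 := hv i (v i + t • (u - v i))
      rw [interp i u (v i) t] at h1
      have h2 : t * (((L - μ) + μ * A i) / 2 * (1 - t) * ‖u - v i‖ ^ 2)
          ≤ t * (m i u - m i (v i)) := by nlinarith [h1]
      exact le_of_mul_le_mul_left h2 ht
    by_contra hcon
    push_neg at hcon
    have hΔ : 0 ≤ m i u - m i (v i) := sub_nonneg.mpr (hv i u)
    have hDpos : 0 < ‖u - v i‖ ^ 2 := by nlinarith [key 1 one_pos]
    set σi := (L - μ) + μ * A i with hσdef
    set D := ‖u - v i‖ ^ 2 with hDdef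
    set ε := m i (v i) + σi / 2 * D - m i u with hε
    have hεpos : 0 < ε := by simp only [hε]; linarith
    have ht : 0 < ε / (σi * D) := by positivity
    have h3 := key (ε / (σi * D)) ht
    have h4 : σi / 2 * (1 - ε / (σi * D)) * D = σi / 2 * D - ε / 2 := by
      field_simp
    rw [h4] at h3
    linarith
  -- A i * Lb i simplification
  have hALb : ∀ i, A i * Lb i = (∑ j ∈ Finset.range (i + 1), a j * f (x j) + m i (v i))
      - (L - μ) / 2 * ‖x 0 - xstar‖ ^ 2 := by
    intro i
    have hAne := (hApos i).ne'
    rw [hLb]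
    field_simp
  -- split m k
  have hsplit : ∀ u, m k u = m (k - 1) u
      + a k * (⟪gradient f (x k), u - x k⟫ + μ / 2 * ‖u - x k‖ ^ 2) := by
    intro u
    rw [hm, hm, hk1, Finset.sum_range_succ]
    ring
  have hAk : A k = A (k - 1) + a k := by
    rw [hA, hA, hk1, Finset.sum_range_succ]
  -- quadratic lower bound
  have hquad : ((L - μ) + μ * A (k - 1)) / 2 * ‖v k - v (k - 1)‖ ^ 2
      + a k * (⟪gradient f (x k), v k - x k⟫ + μ / 2 * ‖v k - x k‖ ^ 2)
      ≥ - (a k ^ 2 / (2 * ((L - μ) + μ * A k))) * ‖gradient f (x k)‖ ^ 2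
        + (a k * ((L - μ) + μ * A (k - 1)) / ((L - μ) + μ * A k))
          * ⟪gradient f (x k), v (k - 1) - x k⟫ := by
    set g := gradient f (x k) with hg
    set t := v k - v (k - 1) with htdef
    set d := v (k - 1) - x k with hddef
    set σ' := (L - μ) + μ * A (k - 1) with hσ'def
    set σ := (L - μ) + μ * A k with hσdef
    have hσ'pos := hσpos (k - 1)
    have hσposk := hσpos k
    have hσeq : σ = σ' + μ * a k := by rw [hσdef, hσ'def, hAk]; ring
    have htd : v k - x k = t + d := by rw [htdef, hddef]; module
    have e2 : ‖t + d‖ ^ 2 = ⟪t,t⟫ + 2 * ⟪t,d⟫ + ⟪d,d⟫ := by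
      rw [norm_add_sq_real, real_inner_self_eq_norm_sq, real_inner_self_eq_norm_sq]
    have e3 : ⟪g, t + d⟫ = ⟪t,g⟫ + ⟪g,d⟫ := by
      rw [inner_add_right, real_inner_comm g t]
    have e6 := expand2 t g d (a k / σ) (a k * μ / σ)
    have key : σ' / 2 * ‖t‖ ^ 2 + a k * (⟪g, t + d⟫ + μ / 2 * ‖t + d‖ ^ 2)
        - (- (a k ^ 2 / (2 * σ)) * ‖g‖ ^ 2 + (a k * σ' / σ) * ⟪g, d⟫)
        = σ / 2 * ‖t + ((a k / σ) • g + (a k * μ / σ) • d)‖ ^ 2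
          + a k * μ * σ' / (2 * σ) * ⟪d,d⟫ := by
      rw [e2, e3, e6, ← real_inner_self_eq_norm_sq t, ← real_inner_self_eq_norm_sq g]
      exact scalar_key σ' μ (a k) σ ⟪t,t⟫ ⟪t,g⟫ ⟪t,d⟫ ⟪g,g⟫ ⟪g,d⟫ ⟪d,d⟫
        hσeq hσposk.ne'
    have h1 : 0 ≤ σ / 2 * ‖t + ((a k / σ) • g + (a k * μ / σ) • d)‖ ^ 2 := by positivity
    have h2 : 0 ≤ a k * μ * σ' / (2 * σ) * ⟪d,d⟫ := by
      have := real_inner_self_nonneg (x := d)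
      have hak := (ha k).le
      positivity
    rw [htd]
    linarith [key]
  -- assemble
  rw [hALb k, hALb (k - 1), ha' k, hk1, Finset.sum_range_succ]
  have hchain := hsplit (v k)
  have hsm := hstrongmin (k - 1) (v k)
  linarith [hquad]
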